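/- For every ε > 0 and every element (a₁, a₂) ∈ (ℝ≥0)² viewed in ℓ∞², the element (a₁ + ε, a₂ + ε) of ℝ² lifts under the projection P(x,y,z) = (x,y) to an element of the cone V⁺ ⊆ ℝ³ generated by {(x,y,1) : (x−1)² + y² ≤ 1, y ≥ 0} and the origin; that is, there exists z ∈ ℝ with (a₁ + ε, a₂ + ε, z) ∈ V⁺. Hence P : (ℝ³, V⁺) → (ℝ², positive quadrant) is an order quotient map in the sense that every strictly positive element of ℝ² lifts to a positive element of ℝ³. -/

import Mathlib

/-- The half-disk `{(x, y, 1) : (x−1)² + y² ≤ 1, y ≥ 0}` at height 1 in `ℝ³`. -/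
def halfDisk : Set (ℝ × ℝ × ℝ) :=
  {p | (p.1 - 1) ^ 2 + p.2.1 ^ 2 ≤ 1 ∧ 0 ≤ p.2.1 ∧ p.2.2 = 1}

/-- The cone `V⁺ ⊆ ℝ³` generated by the half-disk and the origin. -/
def Vplus : Set (ℝ × ℝ × ℝ) :=
  {p | ∃ lam : ℝ, 0 ≤ lam ∧ ∃ s ∈ halfDisk, p = lam • s}

/-- For every `ε > 0` and `(a₁, a₂)` with `a₁, a₂ ≥ 0`, the element
`(a₁ + ε, a₂ + ε)` lifts under `P(x,y,z) = (x,y)` to an element of `V⁺`; hence every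
strictly positive element of `ℝ²` lifts to a positive element of `ℝ³`. -/
theorem strictly_positive_lifts_to_Vplus :
    (∀ (ε : ℝ), 0 < ε → ∀ a₁ a₂ : ℝ, 0 ≤ a₁ → 0 ≤ a₂ →
      ∃ z : ℝ, ((a₁ + ε, a₂ + ε, z) : ℝ × ℝ × ℝ) ∈ Vplus) ∧
    (∀ b : ℝ × ℝ, 0 < b.1 → 0 < b.2 →
      ∃ v ∈ Vplus, (v.1, v.2.1) = b) := by
  have key : ∀ x y : ℝ, 0 < x → 0 ≤ y → ((x, y, (x^2+y^2)/(2*x)) : ℝ × ℝ × ℝ) ∈ Vplus := by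
    intro x y hx hy
    set lam : ℝ := (x^2+y^2)/(2*x) with hlam
    have hlampos : 0 < lam := by
      apply div_pos (by positivity) (by linarith)
    refine ⟨lam, hlampos.le, ⟨x/lam, y/lam, 1⟩, ⟨?_, by positivity, rfl⟩, ?_⟩
    · have h2 : (x/lam - 1)^2 + (y/lam)^2 = 1 := by
        field_simp [hlam]
        have e : lam * (2*x) = x^2+y^2 := by rw [hlam]; exact div_mul_cancel₀ _ (by positivity)
        linarith
      exact h2.le
    · have hl := hlampos.ne'
      simp only [Prod.smul_mk, smul_eq_mul, Prod.mk.injEq]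
      refine ⟨?_, ?_, by simp⟩ <;> field_simp
  constructor
  · intro ε hε a₁ a₂ h₁ h₂
    exact ⟨_, key (a₁ + ε) (a₂ + ε) (by linarith) (by linarith)⟩
  · intro b hb1 hb2
    exact ⟨_, key b.1 b.2 hb1 hb2.le, rfl⟩
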